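/- Let M be a topological space and f : M → M a continuous map. If the periodic points of f are dense in the nonwandering set Ω_f, then the periodic points of the shift F are dense in Ω_F := Ω_f^ℤ ∩ M_F. -/

import Mathlib

/-- The nonwandering set of a self-map `g` of a topological space: the points `x` such
that for every neighborhood `U` of `x` there is `n ≥ 1` with `g^n(U) ∩ U ≠ ∅`. -/
def nonwanderingSet {X : Type*} [TopologicalSpace X] (g : X → X) : Set X :=
  {x : X | ∀ U : Set X, IsOpen U → x ∈ U → ∃ n : ℕ, 1 ≤ n ∧ (g^[n] '' U ∩ U).Nonempty}

/-- The shift map `F` on the inverse limit `M_F = { x ∈ M^ℤ | f(x_i) = x_{i+1} }`. -/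
def shiftMap {M : Type*} (f : M → M)
    (x : {x : ℤ → M // ∀ i : ℤ, f (x i) = x (i + 1)}) :
    {x : ℤ → M // ∀ i : ℤ, f (x i) = x (i + 1)} :=
  ⟨fun i => x.val (i + 1), fun i => x.property (i + 1)⟩

lemma shiftMap_iterate {M : Type*} (f : M → M) (n : ℕ)
    (x : {x : ℤ → M // ∀ i : ℤ, f (x i) = x (i + 1)}) (i : ℤ) :
    ((shiftMap f)^[n] x).val i = x.val (i + n) := by
  induction n generalizing x with
  | zero => simp
  | succ n ih =>
    rw [Function.iterate_succ_apply, ih (shiftMap f x)]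
    show x.val (i + n + 1) = x.val (i + (n + 1 : ℕ))
    push_cast
    ring_nf

lemma coord_iterate {M : Type*} {f : M → M}
    (x : {x : ℤ → M // ∀ i : ℤ, f (x i) = x (i + 1)}) (i : ℤ) (n : ℕ) :
    x.val (i + n) = f^[n] (x.val i) := by
  induction n with
  | zero => simp
  | succ n ih =>
    push_cast
    rw [show i + ((n : ℤ) + 1) = (i + n) + 1 by ring, ← x.property (i + n), ih,
      Function.iterate_succ_apply']

/-- If the periodic points of `f` are dense in the nonwandering set `Ω_f`, then the
periodic points of the shift `F` are dense in `Ω_F = Ω_f^ℤ ∩ M_F`. -/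
theorem periodicPts_dense_in_nonwandering_inverse_limit
    {M : Type*} [TopologicalSpace M] (f : M → M) (hf : Continuous f)
    (hdense : nonwanderingSet f ⊆ closure (Function.periodicPts f)) :
    {x : {x : ℤ → M // ∀ i : ℤ, f (x i) = x (i + 1)} | ∀ j : ℤ, x.val j ∈ nonwanderingSet f}
      ⊆ closure (Function.periodicPts (shiftMap f)) := by
  intro x hx
  rw [mem_closure_iff_nhds]
  intro t ht
  obtain ⟨u, hu, hut⟩ := (mem_nhds_induced Subtype.val x t).mp ht
  rw [nhds_pi, Filter.mem_pi] at hu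
  obtain ⟨I, hIfin, U, hU, hIU⟩ := hu
  -- shrink each U i to an open set U' i
  choose U' hU'sub hU'open hxU' using fun i => mem_nhds_iff.mp (hU i)
  -- bound the finite index set I inside [-N, N]
  obtain ⟨a, ha⟩ := hIfin.bddAbove
  obtain ⟨b, hb⟩ := hIfin.bddBelow
  set N : ℕ := a.toNat + (-b).toNat with hN
  have hbound : ∀ i ∈ I, -(N : ℤ) ≤ i ∧ i ≤ (N : ℤ) := by
    intro i hi
    have h1 : i ≤ a := ha hi
    have h2 : b ≤ i := hb hi
    omega
  -- the open set V around x₋ₙ whose j-th iterate lands in U' (j - N)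
  set V : Set M := ⋂ j ∈ Finset.range (2 * N + 1), f^[j] ⁻¹' U' ((j : ℤ) - N) with hV
  have hVopen : IsOpen V := by
    apply isOpen_biInter_finset
    intro j _
    exact (hU'open _).preimage (hf.iterate j)
  have hxV : x.val (-(N : ℤ)) ∈ V := by
    rw [hV]
    simp only [Set.mem_iInter, Set.mem_preimage]
    intro j _
    rw [← coord_iterate x (-(N : ℤ)) j]
    have : -(N : ℤ) + j = (j : ℤ) - N := by ring
    rw [this]
    exact hxU' _
  -- find a periodic point p of f inside V
  have hcl : x.val (-(N : ℤ)) ∈ closure (Function.periodicPts f) := hdense (hx _)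
  obtain ⟨p, hpV, hpper⟩ := (mem_closure_iff.mp hcl) V hVopen hxV
  obtain ⟨k, hk, hpk⟩ := hpper
  have hkZ : (0 : ℤ) < (k : ℤ) := by exact_mod_cast hk
  -- build the periodic orbit sequence y
  have hyprop : ∀ i : ℤ, f (f^[((i + N) % k).toNat] p) = f^[((i + 1 + N) % k).toNat] p := by
    intro i
    set r : ℤ := (i + N) % k with hr
    have hr0 : 0 ≤ r := Int.emod_nonneg _ (by omega)
    have hrk : r < k := Int.emod_lt_of_pos _ hkZ
    have hmod : (i + 1 + N) % k = (r + 1) % k := by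
      have hsplit : (i + N) % k + k * ((i + N) / k) = i + N := Int.emod_add_mul_ediv _ _
      have heq : i + 1 + (N : ℤ) = (r + 1) + (k : ℤ) * ((i + N) / k) := by
        rw [hr]; linarith
      rw [heq, Int.add_mul_emod_self_left]
    rw [← Function.iterate_succ_apply' f]
    by_cases hcase : r + 1 = k
    · have h1 : r.toNat + 1 = k := by omega
      have h2 : ((i + 1 + N) % k).toNat = 0 := by
        rw [hmod, hcase, Int.emod_self]; rfl
      rw [h2, show r.toNat.succ = k from h1]
      simp only [Function.iterate_zero_apply]
      exact hpk
    · have h1 : (r + 1) % k = r + 1 := Int.emod_eq_of_lt (by omega) (by omega)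
      have h2 : ((i + 1 + N) % k).toNat = r.toNat + 1 := by
        rw [hmod, h1]; omega
      rw [h2]
  set y : {x : ℤ → M // ∀ i : ℤ, f (x i) = x (i + 1)} :=
    ⟨fun i => f^[((i + N) % k).toNat] p, hyprop⟩ with hy
  refine ⟨y, ?_, ?_⟩
  · -- y ∈ t
    apply hut
    show y.val ∈ u
    apply hIU
    intro i hi
    obtain ⟨hi1, hi2⟩ := hbound i hi
    apply hU'sub i
    -- y.val i = f^[(i+N).toNat % k] p = f^[(i+N).toNat] p ∈ U' i
    have hnn : (0 : ℤ) ≤ i + N := by omega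
    set m : ℕ := (i + N).toNat with hm
    have hcast : ((i + N) % k).toNat = m % k := by
      have : (((i + N) % k).toNat : ℤ) = ((m % k : ℕ) : ℤ) := by
        rw [Int.toNat_of_nonneg (Int.emod_nonneg _ (by omega))]
        push_cast
        rw [hm, Int.toNat_of_nonneg hnn]
      exact_mod_cast this
    show f^[((i + N) % k).toNat] p ∈ U' i
    rw [hcast, hpk.iterate_mod_apply m]
    have hmem : p ∈ f^[m] ⁻¹' U' ((m : ℤ) - N) := by
      have := Set.mem_iInter.mp (hV ▸ hpV) m
      have hm2 : m ∈ Finset.range (2 * N + 1) := by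
        simp only [Finset.mem_range]; omega
      exact Set.mem_iInter.mp (this) hm2
    have : ((m : ℤ)) - N = i := by rw [hm, Int.toNat_of_nonneg hnn]; ring
    rw [this] at hmem
    exact hmem
  · -- y is periodic for the shift
    exact ⟨k, hk, by
      show (shiftMap f)^[k] y = y
      apply Subtype.ext
      funext i
      rw [shiftMap_iterate]
      show f^[((i + k + N) % k).toNat] p = f^[((i + N) % k).toNat] p
      congr 2
      rw [show i + (k : ℤ) + N = (i + N) + (k : ℤ) * 1 by ring, Int.add_mul_emod_self_left]⟩
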